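/- Let α > 0 and let E ⊂ ℝ² be a countable union of α-Lipschitz graphs over the x-axis. Then for every H¹-measurable subset A ⊂ E, H¹(A) ≤ √(1+α²) · ∫_ℝ #(A ∩ π₀⁻¹{t}) dt, where π₀ is the projection onto the x-axis. -/

import Mathlib

open MeasureTheory Set Real
open scoped ENNReal NNReal

noncomputable section

abbrev Plane := EuclideanSpace ℝ (Fin 2)

def mk2 (a b : ℝ) : Plane := (WithLp.equiv 2 (Fin 2 → ℝ)).symm ![a, b]

/-- Orthogonal projection onto direction (cos θ, sin θ). -/
def proj (θ : ℝ) (x : Plane) : ℝ := x 0 * Real.cos θ + x 1 * Real.sin θ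

/-- Favard length. -/
def Fav (E : Set Plane) : ℝ≥0∞ := ∫⁻ θ in Set.Ioo 0 Real.pi, μH[1] (proj θ '' E)

lemma mk2_eta (x : Plane) : mk2 (x 0) (x 1) = x := by
  ext i; fin_cases i <;> rfl

lemma lip_graph {α : ℝ} (hα : 0 ≤ α) {F : ℝ → ℝ} (hF : LipschitzWith α.toNNReal F) :
    LipschitzWith (Real.sqrt (1 + α ^ 2)).toNNReal (fun t => mk2 t (F t)) := by
  rw [lipschitzWith_iff_dist_le_mul]
  intro t u
  have h1 : dist (F t) (F u) ≤ α * dist t u := by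
    have := hF.dist_le_mul t u
    rwa [Real.coe_toNNReal _ hα] at this
  have hd : (0:ℝ) ≤ dist t u := dist_nonneg
  have hcoe : ((Real.sqrt (1 + α ^ 2)).toNNReal : ℝ) = Real.sqrt (1 + α ^ 2) :=
    Real.coe_toNNReal _ (Real.sqrt_nonneg _)
  rw [hcoe, EuclideanSpace.dist_eq]
  have hsum : ∑ i : Fin 2, dist ((mk2 t (F t)) i) ((mk2 u (F u)) i) ^ 2
      = dist t u ^ 2 + dist (F t) (F u) ^ 2 := by
    simp [Fin.sum_univ_two, mk2]
  rw [hsum]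
  have h2 : dist t u ^ 2 + dist (F t) (F u) ^ 2 ≤ (1 + α ^ 2) * dist t u ^ 2 := by
    have : dist (F t) (F u) ^ 2 ≤ (α * dist t u) ^ 2 := by
      apply sq_le_sq' _ h1
      nlinarith [dist_nonneg (x := F t) (y := F u)]
    nlinarith
  calc Real.sqrt (dist t u ^ 2 + dist (F t) (F u) ^ 2)
      ≤ Real.sqrt ((1 + α ^ 2) * dist t u ^ 2) := Real.sqrt_le_sqrt h2
    _ = Real.sqrt (1 + α ^ 2) * dist t u := by
        rw [Real.sqrt_mul (by positivity), Real.sqrt_sq hd]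

/-- Coarea inequality for countable unions of α-Lipschitz graphs over the x-axis. -/
theorem stmt3 (α : ℝ) (hα : 0 < α) (f : ℕ → ℝ → ℝ) (s : ℕ → Set ℝ)
    (hf : ∀ n, LipschitzOnWith α.toNNReal (f n) (s n))
    (E : Set Plane) (hE : E = ⋃ n, (fun t => mk2 t (f n t)) '' s n)
    (A : Set Plane) (hA : A ⊆ E) (hAm : MeasurableSet A) :
    μH[1] A ≤ ENNReal.ofReal (Real.sqrt (1 + α ^ 2)) *
      ∫⁻ t : ℝ, ((A ∩ {x : Plane | x 0 = t}).encard : ℝ≥0∞) := by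
  -- extend each f n to a global Lipschitz function
  choose F hFlip hFeq using fun n => (hf n).extend_real
  set K : ℝ≥0 := (Real.sqrt (1 + α ^ 2)).toNNReal with hK
  have hg : ∀ n, LipschitzWith K (fun t => mk2 t (F n t)) :=
    fun n => lip_graph hα.le (hFlip n)
  set g : ℕ → ℝ → Plane := fun n t => mk2 t (F n t) with hgdef
  -- full graphs
  set G : ℕ → Set Plane := fun n => {x : Plane | x 1 = F n (x 0)} with hGdef
  have hGm : ∀ n, MeasurableSet (G n) := by
    intro n
    have hc1 : Continuous fun x : Plane => x 1 := (EuclideanSpace.proj (1 : Fin 2)).continuous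
    have hc0 : Continuous fun x : Plane => x 0 := (EuclideanSpace.proj (0 : Fin 2)).continuous
    exact isClosed_eq hc1 ((hFlip n).continuous.comp hc0) |>.measurableSet
  have hAG : A ⊆ ⋃ n, G n := by
    intro x hx
    obtain ⟨_, ⟨n, rfl⟩, t, ht, rfl⟩ := hE ▸ hA hx
    exact mem_iUnion.2 ⟨n, by simpa [hGdef, mk2] using (hFeq n ht)⟩
  set C : ℕ → Set Plane := disjointed G with hCdef
  have hCm : ∀ n, MeasurableSet (C n) := MeasurableSet.disjointed hGm
  have hCd : Pairwise (Function.onFun Disjoint C) := disjoint_disjointed G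
  have hCsub : ∀ n, C n ⊆ G n := disjointed_subset G
  have hAC : A = ⋃ n, A ∩ C n := by
    rw [← inter_iUnion, iUnion_disjointed]
    exact (inter_eq_left.2 hAG).symm
  set B : ℕ → Set ℝ := fun n => g n ⁻¹' (A ∩ C n) with hBdef
  have hBm : ∀ n, MeasurableSet (B n) :=
    fun n => ((hAm.inter (hCm n)).preimage (hg n).continuous.measurable)
  have himg : ∀ n, A ∩ C n ⊆ g n '' B n := by
    intro n x hx
    have hx1 : x 1 = F n (x 0) := hCsub n hx.2
    have : g n (x 0) = x := by rw [hgdef]; simp only [← hx1]; exact mk2_eta x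
    exact ⟨x 0, by simpa [hBdef, this] using hx, this⟩
  -- measure bound on each piece
  have hpiece : ∀ n, μH[1] (A ∩ C n) ≤ (K : ℝ≥0∞) * volume (B n) := by
    intro n
    calc μH[1] (A ∩ C n) ≤ μH[1] (g n '' B n) := measure_mono (himg n)
      _ ≤ (K : ℝ≥0∞) ^ (1 : ℝ) * μH[1] (B n) :=
          (hg n).hausdorffMeasure_image_le zero_le_one (B n)
      _ = (K : ℝ≥0∞) * volume (B n) := by
          rw [ENNReal.rpow_one, hausdorffMeasure_real]
  -- pointwise fiber count bound
  have hfiber : ∀ t : ℝ, ∑' n, (B n).indicator (fun _ => (1 : ℝ≥0∞)) t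
      ≤ ((A ∩ {x : Plane | x 0 = t}).encard : ℝ≥0∞) := by
    intro t
    set S : Set ℕ := {n | t ∈ B n} with hS
    have h1 : ∑' n, (B n).indicator (fun _ => (1 : ℝ≥0∞)) t
        = ∑' (_ : S), (1 : ℝ≥0∞) := by
      rw [tsum_subtype S (fun _ => (1 : ℝ≥0∞))]
      apply tsum_congr
      intro n
      by_cases hn : t ∈ B n
      · simp [Set.indicator_apply, hn, hS]
      · simp [Set.indicator_apply, hn, hS]
    rw [h1, ENNReal.tsum_set_one]
    have hinj : Set.InjOn (fun n => g n t) S := by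
      intro n hn m hm hnm
      by_contra hne
      have h1 : g n t ∈ C n := (hn : t ∈ B n).2
      have h2 : g n t ∈ C m := by
        rw [show g n t = g m t from hnm]; exact (hm : t ∈ B m).2
      exact (hCd hne).le_bot ⟨h1, h2⟩
    have hsub : (fun n => g n t) '' S ⊆ A ∩ {x : Plane | x 0 = t} := by
      rintro _ ⟨n, hn, rfl⟩
      exact ⟨(hn : t ∈ B n).1, rfl⟩
    calc (S.encard : ℝ≥0∞) = (((fun n => g n t) '' S).encard : ℝ≥0∞) := by
          rw [hinj.encard_image]
      _ ≤ _ := by exact_mod_cast ENat.toENNReal_le.2 (encard_mono hsub)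
  -- put it together
  have hofReal : ENNReal.ofReal (Real.sqrt (1 + α ^ 2)) = (K : ℝ≥0∞) := rfl
  rw [hofReal]
  calc μH[1] A ≤ ∑' n, μH[1] (A ∩ C n) := by
        nth_rewrite 1 [hAC]; exact measure_iUnion_le _
    _ ≤ ∑' n, (K : ℝ≥0∞) * volume (B n) := ENNReal.tsum_le_tsum hpiece
    _ = (K : ℝ≥0∞) * ∑' n, volume (B n) := ENNReal.tsum_mul_left
    _ = (K : ℝ≥0∞) * ∫⁻ t, ∑' n, (B n).indicator (fun _ => (1 : ℝ≥0∞)) t := by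
        congr 1
        have hv : ∀ n, volume (B n) = ∫⁻ t, (B n).indicator (fun _ => (1 : ℝ≥0∞)) t := by
          intro n; exact (lintegral_indicator_one (hBm n)).symm
        simp_rw [hv]
        exact (lintegral_tsum fun n =>
          ((measurable_one.indicator (hBm n)).aemeasurable)).symm
    _ ≤ (K : ℝ≥0∞) * ∫⁻ t, ((A ∩ {x : Plane | x 0 = t}).encard : ℝ≥0∞) :=
        mul_le_mul_right (lintegral_mono hfiber) _
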